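/- arXiv:1603.08097 — 2 statements merged into one kernel-verified Lean document; each statement's English description precedes it below -/
import Mathlib

section
/- For every natural number j ≥ 1, the series ∑_{r=1}^∞ arctan( F_{2j}·√(5·L_{4j})·L_{4jr−2j} / L_{8jr−4j} ) converges and its sum equals π/2. -/
def lucas : ℕ → ℕ
  | 0 => 2
  | 1 => 1
  | n + 2 => lucas (n + 1) + lucas n

open Real

lemma lucas_binet : ∀ n : ℕ, (lucas n : ℝ) = goldenRatio ^ n + goldenConj ^ n := by
  intro n
  induction n using Nat.twoStepInduction with
  | zero => norm_num [lucas]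
  | one => simp [lucas]
  | more n h1 h2 =>
    show ((lucas (n+1) + lucas n : ℕ) : ℝ) = _
    push_cast
    rw [h1, h2]
    linear_combination (goldenRatio ^ n) * goldenRatio_sq + (goldenConj ^ n) * goldenConj_sq - ((goldenRatio ^ n + goldenConj ^ n) / 2) * Real.sq_sqrt (by norm_num : (0:ℝ) ≤ 5)

lemma lucas_pos : ∀ n : ℕ, 0 < lucas n := by
  intro n
  induction n using Nat.twoStepInduction with
  | zero => norm_num [lucas]
  | one => norm_num [lucas]
  | more n h1 h2 => show 0 < lucas (n+1) + lucas n; omega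

lemma fib_gold (n : ℕ) : Real.sqrt 5 * (Nat.fib n : ℝ) = goldenRatio ^ n - goldenConj ^ n := by
  have h5 : Real.sqrt 5 ≠ 0 := by positivity
  rw [Real.coe_fib_eq]
  field_simp

lemma idA (c b : ℕ) (hb : Even b) :
    (Nat.fib (c + 2 * b) : ℝ) = Nat.fib c + Nat.fib b * lucas (c + b) := by
  have hPQ : goldenRatio ^ b * goldenConj ^ b = 1 := by
    rw [← mul_pow, goldenRatio_mul_goldenConj, hb.neg_one_pow]
  rw [Real.coe_fib_eq, Real.coe_fib_eq, Real.coe_fib_eq, lucas_binet]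
  linear_combination ((goldenRatio ^ c - goldenConj ^ c) / Real.sqrt 5) * hPQ

lemma idB (c b : ℕ) (hb : Even b) (hc : Even c) :
    5 * (Nat.fib (c + 2 * b) : ℝ) * Nat.fib c + lucas (2 * b) = lucas (2 * (c + b)) := by
  have hXY : goldenRatio ^ c * goldenConj ^ c = 1 := by
    rw [← mul_pow, goldenRatio_mul_goldenConj, hc.neg_one_pow]
  have hs : Real.sqrt 5 * Real.sqrt 5 = 5 := Real.mul_self_sqrt (by norm_num)
  have key : (5:ℝ) * Nat.fib (c + 2*b) * Nat.fib c
      = (Real.sqrt 5 * Nat.fib (c + 2*b)) * (Real.sqrt 5 * Nat.fib c) := by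
    rw [show (Real.sqrt 5 * (Nat.fib (c + 2*b):ℝ)) * (Real.sqrt 5 * Nat.fib c)
      = (Real.sqrt 5 * Real.sqrt 5) * Nat.fib (c + 2*b) * Nat.fib c by ring, hs]
  rw [key, fib_gold, fib_gold, lucas_binet, lucas_binet]
  linear_combination (-(goldenRatio ^ (2*b) + goldenConj ^ (2*b))) * hXY

theorem stmt9 (j : ℕ) (hj : 1 ≤ j) :
    HasSum (fun r : ℕ =>
        Real.arctan ((Nat.fib (2 * j) : ℝ) * Real.sqrt (5 * (lucas (4 * j) : ℝ)) *
            (lucas (4 * j * (1 + r) - 2 * j) : ℝ) /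
          (lucas (8 * j * (1 + r) - 4 * j) : ℝ)))
      (Real.pi / 2) := by
  set L : ℝ := (lucas (4 * j) : ℝ) with hLdef
  have hL : 0 < L := by rw [hLdef]; exact Nat.cast_pos.mpr (lucas_pos _)
  have hsL : Real.sqrt L ≠ 0 := by positivity
  have hsL2 : Real.sqrt L * Real.sqrt L = L := Real.mul_self_sqrt hL.le
  have hs5 : Real.sqrt 5 * Real.sqrt 5 = 5 := Real.mul_self_sqrt (by norm_num)
  set f : ℕ → ℝ := fun r => Real.sqrt 5 * (Nat.fib (4 * j * r) : ℝ) / Real.sqrt L with hfdef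
  have hfnonneg : ∀ r, 0 ≤ f r := fun r => by positivity
  -- per-term identity
  have step : ∀ r : ℕ,
      Real.arctan ((Nat.fib (2 * j) : ℝ) * Real.sqrt (5 * L) *
            (lucas (4 * j * (1 + r) - 2 * j) : ℝ) / (lucas (8 * j * (1 + r) - 4 * j) : ℝ))
        = Real.arctan (f (r + 1)) - Real.arctan (f r) := by
    intro r
    have h1 : 4 * j * (1 + r) - 2 * j = 4 * j * r + 2 * j := by
      have h : 4 * j * (1 + r) = 4 * j + 4 * j * r := by ring
      omega
    have h2 : 8 * j * (1 + r) - 4 * j = 8 * j * r + 4 * j := by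
      have h : 8 * j * (1 + r) = 8 * j + 8 * j * r := by ring
      omega
    have e1idx : 4 * j * (r + 1) = 4 * j * r + 4 * j := by ring
    have fA := idA (4 * j * r) (2 * j) (even_two_mul j)
    rw [show 4 * j * r + 2 * (2 * j) = 4 * j * r + 4 * j from by ring] at fA
    have fB := idB (4 * j * r) (2 * j) (even_two_mul j) ⟨2 * j * r, by ring⟩
    have e2idx : 2 * (4 * j * r + 2 * j) = 8 * j * r + 4 * j := by ring
    have e3idx : 2 * (2 * j) = 4 * j := by ring
    rw [e2idx, e3idx] at fB
    set Luc1 : ℝ := (lucas (4 * j * r + 2 * j) : ℝ) with hLuc1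
    set Luc2 : ℝ := (lucas (8 * j * r + 4 * j) : ℝ) with hLuc2
    have hLuc2pos : 0 < Luc2 := by rw [hLuc2]; exact Nat.cast_pos.mpr (lucas_pos _)
    have e1 : f (r + 1) - f r = Real.sqrt 5 * (Nat.fib (2 * j) : ℝ) * Luc1 / Real.sqrt L := by
      simp only [hfdef, e1idx, fA]
      field_simp
      ring
    have hmul : f (r + 1) * f r
        = 5 * (Nat.fib (4 * j * r + 4 * j) : ℝ) * (Nat.fib (4 * j * r) : ℝ) / L := by
      simp only [hfdef, e1idx]
      rw [div_mul_div_comm, hsL2]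
      congr 1
      linear_combination ((Nat.fib (4 * j * r + 4 * j) : ℝ) * (Nat.fib (4 * j * r) : ℝ)) * hs5
    have e2 : 1 + f (r + 1) * f r = Luc2 / L := by
      rw [hmul, ← fB]
      field_simp
      rw [← hLdef]
      ring
    have hlt : f (r + 1) * (-(f r)) < 1 := by
      have := mul_nonneg (hfnonneg (r + 1)) (hfnonneg r)
      nlinarith
    have harctan := Real.arctan_add hlt
    rw [Real.arctan_neg] at harctan
    rw [show f (r + 1) + -(f r) = f (r + 1) - f r by ring,
      show 1 - f (r + 1) * -(f r) = 1 + f (r + 1) * f r by ring] at harctan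
    rw [h1, h2, ← hLuc1, ← hLuc2, show Real.arctan (f (r+1)) - Real.arctan (f r)
      = Real.arctan (f (r+1)) + -Real.arctan (f r) by ring, harctan, e1, e2]
    congr 1
    rw [Real.sqrt_mul (by norm_num : (0:ℝ) ≤ 5) L]
    field_simp
    linear_combination Luc1 * hsL2
  have hnonneg : ∀ r : ℕ, 0 ≤ Real.arctan ((Nat.fib (2 * j) : ℝ) * Real.sqrt (5 * L) *
      (lucas (4 * j * (1 + r) - 2 * j) : ℝ) / (lucas (8 * j * (1 + r) - 4 * j) : ℝ)) := by
    intro r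
    rw [← Real.arctan_zero]
    exact Real.arctan_strictMono.monotone (by positivity)
  rw [hasSum_iff_tendsto_nat_of_nonneg hnonneg]
  have hg0 : Real.arctan (f 0) = 0 := by
    simp [hfdef]
  have hsum : ∀ n : ℕ, (∑ i ∈ Finset.range n,
      Real.arctan ((Nat.fib (2 * j) : ℝ) * Real.sqrt (5 * L) *
        (lucas (4 * j * (1 + i) - 2 * j) : ℝ) / (lucas (8 * j * (1 + i) - 4 * j) : ℝ)))
      = Real.arctan (f n) := by
    intro n
    rw [Finset.sum_congr rfl fun i _ => step i, Finset.sum_range_sub (fun i => Real.arctan (f i)),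
      hg0, sub_zero]
  rw [Filter.tendsto_congr hsum]
  -- limit
  have hfibN : Filter.Tendsto (fun n : ℕ => Nat.fib (4 * j * n)) Filter.atTop Filter.atTop := by
    apply Filter.tendsto_atTop_mono' Filter.atTop _ Filter.tendsto_id
    filter_upwards [Filter.eventually_ge_atTop 5] with n hn
    calc n ≤ Nat.fib n := Nat.le_fib_self hn
      _ ≤ Nat.fib (4 * j * n) := Nat.fib_mono (by nlinarith)
  have hf : Filter.Tendsto f Filter.atTop Filter.atTop := by
    have : f = fun n : ℕ => (Real.sqrt 5 / Real.sqrt L) * (Nat.fib (4 * j * n) : ℝ) := by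
      funext n; simp only [hfdef]; ring
    rw [this]
    exact (tendsto_natCast_atTop_atTop.comp hfibN).const_mul_atTop (by positivity)
  exact tendsto_nhds_of_tendsto_nhdsWithin (Real.tendsto_arctan_atTop.comp hf)
end

section
/- For every natural number j ≥ 1, the series ∑_{r=1}^∞ arctan( 5·√(L_{4j})·F_{2j}·F_{4jr−1} / L_{8jr−2} ) converges and its sum equals arctan( √(L_{4j}) / L_{2j−1} ). -/
lemma lucas_add_two (n : ℕ) : lucas (n+2) = lucas (n+1) + lucas n := rfl

lemma lucas_fib (n : ℕ) : (lucas n : ℤ) = 2 * Nat.fib (n+1) - Nat.fib n := by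
  induction n using Nat.twoStepInduction with
  | zero => simp [lucas]
  | one => simp [lucas, Nat.fib]
  | more n h1 h2 =>
    rw [lucas_add_two]
    push_cast
    have e1 : (Nat.fib (n+2+1) : ℤ) = Nat.fib (n+1) + Nat.fib (n+1+1) := by
      exact_mod_cast Nat.fib_add_two (n := n+1)
    have e2 : (Nat.fib (n+2) : ℤ) = Nat.fib n + Nat.fib (n+1) := by
      exact_mod_cast Nat.fib_add_two (n := n)
    rw [e1, e2]
    linarith

lemma cassini (n : ℕ) :
    ((Nat.fib (n+1) : ℤ))^2 - Nat.fib (n+1) * Nat.fib n - ((Nat.fib n : ℤ))^2 = (-1)^n := by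
  induction n with
  | zero => simp
  | succ n ih =>
    rw [Nat.fib_add_two]
    push_cast
    ring_nf
    ring_nf at ih
    linear_combination (-1 : ℤ) * ih

lemma fib_addZ (m n : ℕ) :
    (Nat.fib (m + n + 1) : ℤ) = Nat.fib m * Nat.fib n + Nat.fib (m+1) * Nat.fib (n+1) := by
  exact_mod_cast Nat.fib_add m n

lemma fib_expand (m n p q r : ℕ) (hp : p = m + n + 1) (hq : q = m + 1) (hr : r = n + 1) :
    (Nat.fib p : ℤ) = Nat.fib m * Nat.fib n + Nat.fib q * Nat.fib r := by
  subst hp hq hr; exact fib_addZ m n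

lemma fib_step (n p q : ℕ) (hp : p = n+1) (hq : q = n+2) :
    (Nat.fib q : ℤ) = Nat.fib n + Nat.fib p := by
  subst hp hq; exact_mod_cast Nat.fib_add_two

lemma hcuZ (k : ℕ) :
    ((Nat.fib (2*k+3) : ℤ))^2 - Nat.fib (2*k+3) * Nat.fib (2*k+2) - ((Nat.fib (2*k+2) : ℤ))^2 = 1 := by
  have h := cassini (2*k+2)
  rw [show 2*k+2+1 = 2*k+3 from by omega] at h
  rw [h]
  rw [show 2*k+2 = 2*(k+1) from by omega, pow_mul]
  norm_num

theorem keyA (b k : ℕ) :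
    5 * (Nat.fib (2*k+2) : ℤ) * Nat.fib (2*b+2*k+3) =
      lucas (2*b+4*k+5) - lucas (2*b+1) := by
  rw [lucas_fib (2*b+4*k+5), lucas_fib (2*b+1)]
  rw [show 2*b+4*k+5+1 = 2*b+4*k+6 from by omega, show 2*b+1+1 = 2*b+2 from by omega]
  have A3 : (Nat.fib (2*b+4*k+6) : ℤ)
      = Nat.fib (b+1) * Nat.fib (b+4*k+4) + Nat.fib (b+2) * Nat.fib (b+4*k+5) :=
    fib_expand (b+1) (b+4*k+4) _ _ _ (by omega) (by omega) (by omega)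
  have A4 : (Nat.fib (2*b+4*k+5) : ℤ)
      = Nat.fib b * Nat.fib (b+4*k+4) + Nat.fib (b+1) * Nat.fib (b+4*k+5) :=
    fib_expand b (b+4*k+4) _ _ _ (by omega) (by omega) (by omega)
  have A5 : (Nat.fib (b+4*k+5) : ℤ)
      = Nat.fib b * Nat.fib (4*k+4) + Nat.fib (b+1) * Nat.fib (4*k+5) :=
    fib_expand b (4*k+4) _ _ _ (by omega) (by omega) (by omega)
  have A6 : (Nat.fib (b+4*k+4) : ℤ)
      = Nat.fib b * Nat.fib (4*k+3) + Nat.fib (b+1) * Nat.fib (4*k+4) :=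
    fib_expand b (4*k+3) _ _ _ (by omega) (by omega) (by omega)
  have A7 : (Nat.fib (4*k+5) : ℤ)
      = Nat.fib (2*k+2) * Nat.fib (2*k+2) + Nat.fib (2*k+3) * Nat.fib (2*k+3) :=
    fib_expand (2*k+2) (2*k+2) _ _ _ (by omega) (by omega) (by omega)
  have A8 : (Nat.fib (4*k+4) : ℤ)
      = Nat.fib (2*k+1) * Nat.fib (2*k+2) + Nat.fib (2*k+2) * Nat.fib (2*k+3) :=
    fib_expand (2*k+1) (2*k+2) _ _ _ (by omega) (by omega) (by omega)
  have A9 : (Nat.fib (4*k+3) : ℤ)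
      = Nat.fib (2*k+1) * Nat.fib (2*k+1) + Nat.fib (2*k+2) * Nat.fib (2*k+2) :=
    fib_expand (2*k+1) (2*k+1) _ _ _ (by omega) (by omega) (by omega)
  have A10 : (Nat.fib (2*b+2) : ℤ)
      = Nat.fib b * Nat.fib (b+1) + Nat.fib (b+1) * Nat.fib (b+2) :=
    fib_expand b (b+1) _ _ _ (by omega) (by omega) (by omega)
  have A11 : (Nat.fib (2*b+1) : ℤ)
      = Nat.fib b * Nat.fib b + Nat.fib (b+1) * Nat.fib (b+1) :=
    fib_expand b b _ _ _ (by omega) (by omega) (by omega)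
  have A13 : (Nat.fib (b+2) : ℤ) = Nat.fib b + Nat.fib (b+1) :=
    fib_step b _ _ (by omega) (by omega)
  have A14 : (Nat.fib (2*k+1) : ℤ) = Nat.fib (2*k+3) - Nat.fib (2*k+2) := by
    have := fib_step (2*k+1) (2*k+2) (2*k+3) (by omega) (by omega)
    linarith
  have AX : (Nat.fib (2*b+2*k+3) : ℤ)
      = Nat.fib b * Nat.fib (b+2*k+2) + Nat.fib (b+1) * Nat.fib (b+2*k+3) :=
    fib_expand b (b+2*k+2) _ _ _ (by omega) (by omega) (by omega)
  have AY : (Nat.fib (b+2*k+3) : ℤ)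
      = Nat.fib b * Nat.fib (2*k+2) + Nat.fib (b+1) * Nat.fib (2*k+3) :=
    fib_expand b (2*k+2) _ _ _ (by omega) (by omega) (by omega)
  have AZ : (Nat.fib (b+2*k+2) : ℤ)
      = Nat.fib b * Nat.fib (2*k+1) + Nat.fib (b+1) * Nat.fib (2*k+2) :=
    fib_expand b (2*k+1) _ _ _ (by omega) (by omega) (by omega)
  rw [AX, AY, AZ, A3, A4, A5, A6, A7, A8, A9, A10, A11, A13, A14]
  have hcu := hcuZ k
  set x := (Nat.fib b : ℤ)
  set y := (Nat.fib (b+1) : ℤ)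
  set u := (Nat.fib (2*k+2) : ℤ)
  set v := (Nat.fib (2*k+3) : ℤ)
  linear_combination (x^2 - 4*x*y - y^2) * hcu

theorem keyB (b k : ℕ) :
    (lucas (2*b+1) : ℤ) * lucas (2*b+4*k+5) + lucas (4*k+4) = lucas (4*b+4*k+6) := by
  rw [lucas_fib (2*b+1), lucas_fib (2*b+4*k+5), lucas_fib (4*k+4), lucas_fib (4*b+4*k+6)]
  rw [show 2*b+1+1 = 2*b+2 from by omega, show 2*b+4*k+5+1 = 2*b+4*k+6 from by omega,
      show 4*k+4+1 = 4*k+5 from by omega, show 4*b+4*k+6+1 = 4*b+4*k+7 from by omega]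
  have A1 : (Nat.fib (4*b+4*k+7) : ℤ)
      = Nat.fib (2*b+1) * Nat.fib (2*b+4*k+5) + Nat.fib (2*b+2) * Nat.fib (2*b+4*k+6) :=
    fib_expand (2*b+1) (2*b+4*k+5) _ _ _ (by omega) (by omega) (by omega)
  have A2 : (Nat.fib (4*b+4*k+6) : ℤ)
      = Nat.fib (2*b) * Nat.fib (2*b+4*k+5) + Nat.fib (2*b+1) * Nat.fib (2*b+4*k+6) :=
    fib_expand (2*b) (2*b+4*k+5) _ _ _ (by omega) (by omega) (by omega)
  have A12 : (Nat.fib (2*b) : ℤ) = Nat.fib (2*b+2) - Nat.fib (2*b+1) := by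
    have := fib_step (2*b) (2*b+1) (2*b+2) (by omega) (by omega)
    linarith
  have A3 : (Nat.fib (2*b+4*k+6) : ℤ)
      = Nat.fib (b+1) * Nat.fib (b+4*k+4) + Nat.fib (b+2) * Nat.fib (b+4*k+5) :=
    fib_expand (b+1) (b+4*k+4) _ _ _ (by omega) (by omega) (by omega)
  have A4 : (Nat.fib (2*b+4*k+5) : ℤ)
      = Nat.fib b * Nat.fib (b+4*k+4) + Nat.fib (b+1) * Nat.fib (b+4*k+5) :=
    fib_expand b (b+4*k+4) _ _ _ (by omega) (by omega) (by omega)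
  have A5 : (Nat.fib (b+4*k+5) : ℤ)
      = Nat.fib b * Nat.fib (4*k+4) + Nat.fib (b+1) * Nat.fib (4*k+5) :=
    fib_expand b (4*k+4) _ _ _ (by omega) (by omega) (by omega)
  have A6 : (Nat.fib (b+4*k+4) : ℤ)
      = Nat.fib b * Nat.fib (4*k+3) + Nat.fib (b+1) * Nat.fib (4*k+4) :=
    fib_expand b (4*k+3) _ _ _ (by omega) (by omega) (by omega)
  have A7 : (Nat.fib (4*k+5) : ℤ)
      = Nat.fib (2*k+2) * Nat.fib (2*k+2) + Nat.fib (2*k+3) * Nat.fib (2*k+3) :=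
    fib_expand (2*k+2) (2*k+2) _ _ _ (by omega) (by omega) (by omega)
  have A8 : (Nat.fib (4*k+4) : ℤ)
      = Nat.fib (2*k+1) * Nat.fib (2*k+2) + Nat.fib (2*k+2) * Nat.fib (2*k+3) :=
    fib_expand (2*k+1) (2*k+2) _ _ _ (by omega) (by omega) (by omega)
  have A9 : (Nat.fib (4*k+3) : ℤ)
      = Nat.fib (2*k+1) * Nat.fib (2*k+1) + Nat.fib (2*k+2) * Nat.fib (2*k+2) :=
    fib_expand (2*k+1) (2*k+1) _ _ _ (by omega) (by omega) (by omega)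
  have A10 : (Nat.fib (2*b+2) : ℤ)
      = Nat.fib b * Nat.fib (b+1) + Nat.fib (b+1) * Nat.fib (b+2) :=
    fib_expand b (b+1) _ _ _ (by omega) (by omega) (by omega)
  have A11 : (Nat.fib (2*b+1) : ℤ)
      = Nat.fib b * Nat.fib b + Nat.fib (b+1) * Nat.fib (b+1) :=
    fib_expand b b _ _ _ (by omega) (by omega) (by omega)
  have A13 : (Nat.fib (b+2) : ℤ) = Nat.fib b + Nat.fib (b+1) :=
    fib_step b _ _ (by omega) (by omega)
  have A14 : (Nat.fib (2*k+1) : ℤ) = Nat.fib (2*k+3) - Nat.fib (2*k+2) := by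
    have := fib_step (2*k+1) (2*k+2) (2*k+3) (by omega) (by omega)
    linarith
  rw [A1, A2, A12, A3, A4, A5, A6, A7, A8, A9, A10, A11, A13, A14]
  have hcu := hcuZ k
  have hcx := cassini b
  have he : ((-1 : ℤ)^b)^2 = 1 := by
    rw [← pow_mul, mul_comm, pow_mul]
    norm_num
  set x := (Nat.fib b : ℤ)
  set y := (Nat.fib (b+1) : ℤ)
  set u := (Nat.fib (2*k+2) : ℤ)
  set v := (Nat.fib (2*k+3) : ℤ)
  set e := ((-1 : ℤ))^b
  linear_combination (2 - 2*y^4 + 4*x*y^3 + 2*x^2*y^2 - 4*x^3*y - 2*x^4) * hcu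
    + (-2*e - 5*u^2*e - 2*y^2 - 5*y^2*u^2 + 2*x*y + 5*x*y*u^2 + 2*x^2 + 5*x^2*u^2) * hcx
    + (-2 - 5*u^2) * he

lemma one_le_lucas (n : ℕ) : 1 ≤ lucas n := by
  induction n using Nat.twoStepInduction with
  | zero => simp [lucas]
  | one => simp [lucas]
  | more n h1 h2 => rw [lucas_add_two]; omega

lemma le_lucas (n : ℕ) : n ≤ lucas n := by
  induction n using Nat.twoStepInduction with
  | zero => simp [lucas]
  | one => simp [lucas]
  | more n h1 h2 => have := one_le_lucas n; rw [lucas_add_two]; omega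

lemma lucas_posR (n : ℕ) : (0:ℝ) < (lucas n : ℝ) := by
  exact_mod_cast one_le_lucas n

theorem stmt17 (j : ℕ) (hj : 1 ≤ j) :
    HasSum (fun r : ℕ =>
        Real.arctan (5 * Real.sqrt (lucas (4 * j) : ℝ) * (Nat.fib (2 * j) : ℝ) *
            (Nat.fib (4 * j * (1 + r) - 1) : ℝ) /
          (lucas (8 * j * (1 + r) - 2) : ℝ)))
      (Real.arctan (Real.sqrt (lucas (4 * j) : ℝ) / (lucas (2 * j - 1) : ℝ))) := by
  obtain ⟨k, rfl⟩ : ∃ k, j = k + 1 := ⟨j - 1, by omega⟩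
  set j := k + 1 with hjk
  set C := Real.sqrt (lucas (4 * j) : ℝ) with hCdef
  have hC0 : 0 ≤ C := Real.sqrt_nonneg _
  have i6 : 4 * j = 4 * k + 4 := by omega
  have hC2 : C ^ 2 = ((lucas (4 * k + 4) : ℝ)) := by
    rw [hCdef, i6]; exact Real.sq_sqrt (lucas_posR _).le
  set G : ℕ → ℝ := fun n => Real.arctan (C / (lucas (4 * j * n + 2 * k + 1) : ℝ)) with hGdef
  have hGtend : Filter.Tendsto G Filter.atTop (nhds 0) := by
    have hz : Filter.Tendsto (fun n : ℕ => C / (lucas (4 * j * n + 2 * k + 1) : ℝ))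
        Filter.atTop (nhds 0) := by
      apply squeeze_zero (g := fun n : ℕ => C / ((n + 1 : ℕ) : ℝ))
      · intro n
        exact div_nonneg hC0 (lucas_posR _).le
      · intro n
        apply div_le_div_of_nonneg_left hC0 (by positivity)
        have h1 : n + 1 ≤ 4 * j * n + 2 * k + 1 := by
          have : n ≤ 4 * j * n := Nat.le_mul_of_pos_left n (by omega)
          omega
        have h2 : 4 * j * n + 2 * k + 1 ≤ lucas (4 * j * n + 2 * k + 1) := le_lucas _
        exact_mod_cast h1.trans h2
      · exact (tendsto_const_div_atTop_nhds_zero_nat C).comp (Filter.tendsto_add_atTop_nat 1)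
    have := (Real.continuous_arctan.tendsto 0).comp hz
    simpa [hGdef, Function.comp_def] using this
  have hterm : ∀ r : ℕ,
      Real.arctan (5 * C * (Nat.fib (2 * j) : ℝ) * (Nat.fib (4 * j * (1 + r) - 1) : ℝ) /
        (lucas (8 * j * (1 + r) - 2) : ℝ)) = G r - G (r + 1) := by
    intro r
    set b := 2 * j * r + k with hb
    have hmul : 4 * j * (1 + r) = 2 * b + 2 * k + 4 := by rw [hb, hjk]; ring
    have hmul2 : 8 * j * (1 + r) = 4 * b + 4 * k + 8 := by rw [hb, hjk]; ring
    have i1 : 4 * j * (1 + r) - 1 = 2 * b + 2 * k + 3 := by rw [hmul]; omega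
    have i2 : 8 * j * (1 + r) - 2 = 4 * b + 4 * k + 6 := by rw [hmul2]; omega
    have i3 : 2 * j = 2 * k + 2 := by omega
    have i4 : 4 * j * r + 2 * k + 1 = 2 * b + 1 := by rw [hb, hjk]; ring
    have i5 : 4 * j * (r + 1) + 2 * k + 1 = 2 * b + 4 * k + 5 := by rw [hb, hjk]; ring
    simp only [hGdef, i1, i2, i3, i4, i5]
    have hLa := lucas_posR (2 * b + 1)
    have hLa4 := lucas_posR (2 * b + 4 * k + 5)
    have hLB := lucas_posR (4 * b + 4 * k + 6)
    have hA : 5 * ((Nat.fib (2 * k + 2) : ℝ)) * (Nat.fib (2 * b + 2 * k + 3) : ℝ)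
        = (lucas (2 * b + 4 * k + 5) : ℝ) - (lucas (2 * b + 1) : ℝ) := by
      exact_mod_cast keyA b k
    have hB : ((lucas (2 * b + 1) : ℝ)) * (lucas (2 * b + 4 * k + 5) : ℝ) + C ^ 2
        = (lucas (4 * b + 4 * k + 6) : ℝ) := by
      rw [hC2]; exact_mod_cast keyB b k
    set La := ((lucas (2 * b + 1) : ℝ)) with hLadef
    set La4 := ((lucas (2 * b + 4 * k + 5) : ℝ)) with hLa4def
    set LB := ((lucas (4 * b + 4 * k + 6) : ℝ)) with hLBdef
    have hcond : (C / La) * (-(C / La4)) < 1 := by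
      have h0 : 0 ≤ (C / La) * (C / La4) := by positivity
      nlinarith
    have key := Real.arctan_add hcond
    rw [Real.arctan_neg] at key
    have harg : (C / La + -(C / La4)) / (1 - C / La * -(C / La4))
        = 5 * C * (Nat.fib (2 * k + 2) : ℝ) * (Nat.fib (2 * b + 2 * k + 3) : ℝ) / LB := by
      rw [← hB]
      field_simp
      have hne : La * La4 + C ^ 2 ≠ 0 := by positivity
      rw [show La * La4 - -C ^ 2 = La * La4 + C ^ 2 by ring, mul_div_assoc, div_self hne, mul_one]
      linear_combination (-C) * hA
    rw [harg] at key
    linarith [key]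
  have hnonneg : ∀ r : ℕ,
      0 ≤ Real.arctan (5 * C * (Nat.fib (2 * j) : ℝ) * (Nat.fib (4 * j * (1 + r) - 1) : ℝ) /
        (lucas (8 * j * (1 + r) - 2) : ℝ)) := by
    intro r
    rw [← Real.arctan_zero]
    apply Real.arctan_strictMono.monotone
    positivity
  have hG0 : Real.arctan (C / (lucas (2 * j - 1) : ℝ)) = G 0 := by
    have : 4 * j * 0 + 2 * k + 1 = 2 * j - 1 := by omega
    simp only [hGdef, this]
  rw [hG0, hasSum_iff_tendsto_nat_of_nonneg hnonneg]
  have hsum : ∀ n : ℕ, (∑ i ∈ Finset.range n,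
      Real.arctan (5 * C * (Nat.fib (2 * j) : ℝ) * (Nat.fib (4 * j * (1 + i) - 1) : ℝ) /
        (lucas (8 * j * (1 + i) - 2) : ℝ))) = G 0 - G n := by
    intro n
    rw [Finset.sum_congr rfl (fun i _ => hterm i), Finset.sum_range_sub' G]
  refine Filter.Tendsto.congr (fun n => (hsum n).symm) ?_
  have := tendsto_const_nhds (x := G 0) (f := Filter.atTop (α := ℕ)) |>.sub hGtend
  simpa using this
end
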